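/- Let X be a transitive sectional-Anosov flow on a compact manifold M of dimension n ≥ 3, with sectional-hyperbolic splitting T_{M(X)} M = E^s ⊕ E^c. If x ∈ M(X) is not a singularity of X, then X(x) ∉ E^s_x. -/

import Mathlib

open Set Filter Topology TensorProduct

noncomputable section

/-- Euclidean space `ℝⁿ`, the model for the compact `n`-manifold `M`. -/
abbrev Euc (n : ℕ) := EuclideanSpace ℝ (Fin n)

/-- A `C¹` vector field `X` on the compact region `M ⊆ ℝⁿ`, inwardly transverse to the
boundary, together with its (globally defined) flow `φ`.  Inward transversality is recorded
through the fact that the flow takes `M` into itself for nonnegative times. -/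
structure FlowOn (n : ℕ) (M : Set (Euc n)) where
  /-- the vector field -/
  X : Euc n → Euc n
  /-- the flow of the vector field -/
  φ : ℝ → Euc n → Euc n
  contX : ContDiff ℝ 1 X
  cont : Continuous fun p : ℝ × Euc n => φ p.1 p.2
  flow_zero : ∀ x, φ 0 x = x
  flow_add : ∀ s t x, φ (s + t) x = φ s (φ t x)
  diff : ∀ t, ContDiff ℝ 1 (φ t)
  isFlowOf : ∀ x t, HasDerivAt (fun s => φ s x) (X (φ t x)) t
  forward_inv : ∀ t : ℝ, 0 ≤ t → φ t '' M ⊆ M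

namespace FlowOn

variable {n : ℕ} {M : Set (Euc n)}

/-- The maximal invariant set `M(X) = ⋂_{t ≥ 0} X_t(M)`. -/
def maxInv (F : FlowOn n M) : Set (Euc n) := ⋂ t ∈ Ici (0 : ℝ), F.φ t '' M

/-- The ω-limit set of a point. -/
def omegaSet (F : FlowOn n M) (x : Euc n) : Set (Euc n) :=
  {q | ∃ s : ℕ → ℝ, Tendsto s atTop atTop ∧ Tendsto (fun k => F.φ (s k) x) atTop (𝓝 q)}

/-- A set is invariant if `X_t(Λ) = Λ` for all `t ∈ ℝ`. -/
def Invariant (F : FlowOn n M) (Λ : Set (Euc n)) : Prop := ∀ t : ℝ, F.φ t '' Λ = Λ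

/-- The sectional-Anosov flow is transitive when its maximal invariant set is the
ω-limit set of one of its points. -/
def Transitive (F : FlowOn n M) : Prop := ∃ p ∈ F.maxInv, F.omegaSet p = F.maxInv

/-- An attracting set: a compact invariant set which is the intersection of the forward
images of a compact (isolating) neighborhood of itself. -/
def IsAttracting (F : FlowOn n M) (Λ : Set (Euc n)) : Prop :=
  IsCompact Λ ∧ F.Invariant Λ ∧
    ∃ U : Set (Euc n), IsCompact U ∧ U ⊆ M ∧ Λ ⊆ interior U ∧ Λ = ⋂ t ∈ Ioi (0 : ℝ), F.φ t '' U

/-- An attractor is a transitive attracting set. -/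
def IsAttractor (F : FlowOn n M) (Λ : Set (Euc n)) : Prop :=
  F.IsAttracting Λ ∧ ∃ p ∈ Λ, F.omegaSet p = Λ

end FlowOn

variable {n : ℕ} {M : Set (Euc n)}

/-- The derivative `DX_t(x)` of the time-`t` map of the flow. -/
def dflow (F : FlowOn n M) (t : ℝ) (x : Euc n) : Euc n →L[ℝ] Euc n :=
  fderiv ℝ (F.φ t) x

/-- Two vector fields are `ε`-close in the `C¹` topology on `M` when their values and their
derivatives differ by at most `ε` at every point of `M`. -/
def C1CloseOn (X Y : Euc n → Euc n) (M : Set (Euc n)) (ε : ℝ) : Prop :=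
  ∀ x ∈ M, ‖Y x - X x‖ ≤ ε ∧ ‖fderiv ℝ Y x - fderiv ℝ X x‖ ≤ ε

/-- A linear endomorphism is hyperbolic when no eigenvalue of its complexification lies on
the imaginary axis. -/
def IsHyperbolicEnd (f : Euc n →ₗ[ℝ] Euc n) : Prop :=
  ∀ μ : ℂ, Module.End.HasEigenvalue (f.baseChange ℂ) μ → μ.re ≠ 0

/-- The number (with algebraic multiplicity) of eigenvalues of `f` with negative real part;
equivalently, the dimension of the stable manifold of the hyperbolic singularity with
linear part `f`. -/
def stableDim (f : Euc n →ₗ[ℝ] Euc n) : ℕ :=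
  Module.finrank ℂ (⨆ μ ∈ {z : ℂ | z.re < 0},
    Module.End.maxGenEigenspace (f.baseChange ℂ) μ : Submodule ℂ (ℂ ⊗[ℝ] Euc n))

/-- The (unsigned) area of the parallelogram spanned by `u` and `v`; the two-dimensional
Jacobian `|det (DX_t(x)|_L)|` is the ratio of these areas. -/
def gramArea (u v : Euc n) : ℝ :=
  Real.sqrt (‖u‖ ^ 2 * ‖v‖ ^ 2 - (inner ℝ u v : ℝ) ^ 2)

/-- A sectional-hyperbolic splitting `T_Λ M = E^s ⊕ E^c` over the compact invariant set `Λ`,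
recorded by a continuous family `P` of idempotents with `E^s_x = range (P x)` and
`E^c_x = ker (P x)`: `E^s` is contracting and dominated by `E^c`, `E^c` is sectionally
expanding (of dimension at least two), and all singularities in `Λ` are hyperbolic. -/
structure IsSectionalHyperbolicSplittingOn (F : FlowOn n M) (Λ : Set (Euc n))
    (P : Euc n → Euc n →L[ℝ] Euc n) (C lam : ℝ) : Prop where
  Cpos : 0 < C
  lampos : 0 < lam
  continuous : ContinuousOn P Λ
  idem : ∀ x ∈ Λ, (P x).comp (P x) = P x
  invStable : ∀ x ∈ Λ, ∀ t : ℝ,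
    Submodule.map (dflow F t x).toLinearMap (LinearMap.range (P x).toLinearMap) = LinearMap.range (P (F.φ t x)).toLinearMap
  invCentral : ∀ x ∈ Λ, ∀ t : ℝ,
    Submodule.map (dflow F t x).toLinearMap (LinearMap.ker (P x).toLinearMap) = LinearMap.ker (P (F.φ t x)).toLinearMap
  contracting : ∀ x ∈ Λ, ∀ t > (0 : ℝ), ∀ v ∈ LinearMap.range (P x).toLinearMap,
    ‖dflow F t x v‖ ≤ C * Real.exp (-lam * t) * ‖v‖
  dominated : ∀ x ∈ Λ, ∀ t > (0 : ℝ), ∀ v ∈ LinearMap.range (P x).toLinearMap, ∀ w ∈ LinearMap.ker (P x).toLinearMap,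
    ‖dflow F t x v‖ * ‖w‖ ≤ C * Real.exp (-lam * t) * ‖dflow F t x w‖ * ‖v‖
  centralDim : ∀ x ∈ Λ, 2 ≤ Module.finrank ℝ (LinearMap.ker (P x).toLinearMap)
  sectionallyExpanding : ∀ x ∈ Λ, ∀ t > (0 : ℝ),
    ∀ u ∈ LinearMap.ker (P x).toLinearMap, ∀ v ∈ LinearMap.ker (P x).toLinearMap,
      C⁻¹ * Real.exp (lam * t) * gramArea u v ≤ gramArea (dflow F t x u) (dflow F t x v)
  hypSing : ∀ x ∈ Λ, F.X x = 0 → IsHyperbolicEnd (fderiv ℝ F.X x).toLinearMap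

/-- A sectional-Anosov flow: the maximal invariant set is sectional-hyperbolic. -/
def SectionalAnosov (F : FlowOn n M) : Prop :=
  ∃ P C lam, IsSectionalHyperbolicSplittingOn F F.maxInv P C lam

/-- A hyperbolic splitting `T_Λ M = E^s ⊕ E^X ⊕ E^u` over a (nonsingular) compact invariant
set `Λ`, recorded by two continuous families of idempotents `Ps`, `Pu` with
`E^s_x = range (Ps x)`, `E^u_x = range (Pu x)`, the complementary subbundle
`range (1 - Ps - Pu)` being the flow direction. -/
structure IsHyperbolicSplittingOn (F : FlowOn n M) (Λ : Set (Euc n))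
    (Ps Pu : Euc n → Euc n →L[ℝ] Euc n) (C lam : ℝ) : Prop where
  Cpos : 0 < C
  lampos : 0 < lam
  continuousS : ContinuousOn Ps Λ
  continuousU : ContinuousOn Pu Λ
  idemS : ∀ x ∈ Λ, (Ps x).comp (Ps x) = Ps x
  idemU : ∀ x ∈ Λ, (Pu x).comp (Pu x) = Pu x
  orthoSU : ∀ x ∈ Λ, (Ps x).comp (Pu x) = 0
  orthoUS : ∀ x ∈ Λ, (Pu x).comp (Ps x) = 0
  flowDir : ∀ x ∈ Λ,
    LinearMap.range (ContinuousLinearMap.id ℝ (Euc n) - Ps x - Pu x).toLinearMap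
      = Submodule.span ℝ {F.X x}
  invStable : ∀ x ∈ Λ, ∀ t : ℝ,
    Submodule.map (dflow F t x).toLinearMap (LinearMap.range (Ps x).toLinearMap) = LinearMap.range (Ps (F.φ t x)).toLinearMap
  invUnstable : ∀ x ∈ Λ, ∀ t : ℝ,
    Submodule.map (dflow F t x).toLinearMap (LinearMap.range (Pu x).toLinearMap) = LinearMap.range (Pu (F.φ t x)).toLinearMap
  contracting : ∀ x ∈ Λ, ∀ t > (0 : ℝ), ∀ v ∈ LinearMap.range (Ps x).toLinearMap,
    ‖dflow F t x v‖ ≤ C * Real.exp (-lam * t) * ‖v‖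
  expanding : ∀ x ∈ Λ, ∀ t > (0 : ℝ), ∀ v ∈ LinearMap.range (Pu x).toLinearMap,
    ‖dflow F (-t) x v‖ ≤ C * Real.exp (-lam * t) * ‖v‖

/-- `Λ` is a hyperbolic set of saddle type: it carries a hyperbolic splitting with
`E^s ≠ 0` and `E^u ≠ 0`. -/
def HyperbolicSaddleOn (F : FlowOn n M) (Λ : Set (Euc n)) : Prop :=
  ∃ Ps Pu C lam, IsHyperbolicSplittingOn F Λ Ps Pu C lam ∧
    ∀ x ∈ Λ, LinearMap.range (Ps x).toLinearMap ≠ ⊥ ∧ LinearMap.range (Pu x).toLinearMap ≠ ⊥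


/-- The maximal invariant set is contained in `M`. -/
lemma maxInv_subset (F : FlowOn n M) : F.maxInv ⊆ M := by
  intro x hx
  have := (mem_iInter₂.1 hx) 0 (mem_Ici.2 le_rfl)
  obtain ⟨y, hy, hxy⟩ := this
  rw [F.flow_zero] at hxy
  rwa [← hxy]

/-- The maximal invariant set is backward invariant. -/
lemma maxInv_backward (F : FlowOn n M) {x : Euc n} (hx : x ∈ F.maxInv) (s : ℝ) (hs : 0 ≤ s) :
    F.φ (-s) x ∈ F.maxInv := by
  simp only [FlowOn.maxInv, mem_iInter, mem_Ici] at hx ⊢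
  intro t ht
  obtain ⟨y, hy, hxy⟩ := hx (t + s) (by linarith)
  refine ⟨y, hy, ?_⟩
  have h : (-s) + (t + s) = t := by ring
  rw [← hxy, ← F.flow_add, h]

/-- The derivative of the flow maps the vector field to the vector field. -/
lemma dflow_vf (F : FlowOn n M) (t : ℝ) (y : Euc n) :
    dflow F t y (F.X y) = F.X (F.φ t y) := by
  have h1 : HasDerivAt (fun s : ℝ => F.φ (t + s) y) (F.X (F.φ t y)) 0 := by
    have hf : HasDerivAt (fun s : ℝ => t + s) 1 0 := (hasDerivAt_id (0 : ℝ)).const_add t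
    have hg : HasDerivAt (fun s => F.φ s y) (F.X (F.φ t y)) ((fun s : ℝ => t + s) 0) := by
      simpa using F.isFlowOf y t
    have := hg.scomp 0 hf; simp only [one_smul] at this; exact this
  have h0 : HasDerivAt (fun s => F.φ s y) (F.X y) 0 := by
    have := F.isFlowOf y 0
    rwa [F.flow_zero] at this
  have hD : HasFDerivAt (F.φ t) (fderiv ℝ (F.φ t) y) y :=
    (((F.diff t).differentiable one_ne_zero) y).hasFDerivAt
  have h2 : HasDerivAt (fun s : ℝ => F.φ t (F.φ s y)) (dflow F t y (F.X y)) 0 := by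
    have hD' : HasFDerivAt (F.φ t) (fderiv ℝ (F.φ t) y) (F.φ 0 y) := by
      rw [F.flow_zero]; exact hD
    have := hD'.comp_hasDerivAt 0 h0
    simp only [dflow]; exact this
  have heq : (fun s : ℝ => F.φ (t + s) y) = fun s : ℝ => F.φ t (F.φ s y) := by
    funext s; rw [F.flow_add]
  rw [heq] at h1
  exact h2.unique h1


/-- For a transitive sectional-Anosov flow on a compact `n`-manifold,
`n ≥ 3`, with sectional-hyperbolic splitting `T_{M(X)}M = E^s ⊕ E^c`
(`E^s_x = range (P x)`), the vector field is nowhere tangent to the stable subbundle at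
regular points: if `x ∈ M(X)` is not a singularity, then `X(x) ∉ E^s_x`. -/
theorem vector_field_not_in_stable_bundle_at_regular_points
    {n : ℕ} (hn : 3 ≤ n) {M : Set (Euc n)} (hM : IsCompact M)
    (F : FlowOn n M) (htrans : F.Transitive)
    (P : Euc n → Euc n →L[ℝ] Euc n) (C lam : ℝ)
    (hsh : IsSectionalHyperbolicSplittingOn F F.maxInv P C lam)
    (x : Euc n) (hx : x ∈ F.maxInv) (hreg : F.X x ≠ 0) :
    F.X x ∉ LinearMap.range (P x).toLinearMap := by
  intro hmem
  -- bound on ‖X‖ over the compact set M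
  obtain ⟨B, hB⟩ := hM.exists_bound_of_continuousOn F.contX.continuous.continuousOn
  -- limit : C * exp(-lam * t) * B → 0
  have hneg : Tendsto (fun t : ℝ => -lam * t) atTop atBot := by
    have : Tendsto (fun t : ℝ => lam * t) atTop atTop :=
      tendsto_id.const_mul_atTop hsh.lampos
    rw [show (fun t : ℝ => -lam * t) = fun t : ℝ => -(lam * t) by funext t; ring]
    exact tendsto_neg_atBot_iff.2 this
  have hlim : Tendsto (fun t : ℝ => C * Real.exp (-lam * t) * B) atTop (𝓝 0) := by
    have := (Real.tendsto_exp_atBot.comp hneg).const_mul C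
    simpa using this.mul_const B
  have hXpos : 0 < ‖F.X x‖ := norm_pos_iff.2 hreg
  have hev : ∀ᶠ t : ℝ in atTop, C * Real.exp (-lam * t) * B < ‖F.X x‖ :=
    hlim.eventually_lt_const hXpos
  obtain ⟨t, ht0, hlt⟩ := ((eventually_gt_atTop (0 : ℝ)).and hev).exists
  set y := F.φ (-t) x with hy_def
  have hy : y ∈ F.maxInv := maxInv_backward F hx t ht0.le
  have hyM : y ∈ M := maxInv_subset F hy
  -- X y is in the stable bundle at y
  have hXy : F.X y ∈ LinearMap.range (P y).toLinearMap := by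
    have hinv := hsh.invStable x hx (-t)
    have : dflow F (-t) x (F.X x) ∈
        Submodule.map (dflow F (-t) x).toLinearMap (LinearMap.range (P x).toLinearMap) :=
      Submodule.mem_map_of_mem hmem
    rw [hinv] at this
    rwa [dflow_vf F (-t) x] at this
  -- contraction along the stable bundle
  have hcontr := hsh.contracting y hy t ht0 (F.X y) hXy
  have hflow : F.φ t y = x := by
    rw [hy_def, ← F.flow_add]
    simp [F.flow_zero]
  rw [dflow_vf F t y, hflow] at hcontr
  have hXyB : ‖F.X y‖ ≤ B := hB y hyM
  have h1 : ‖F.X x‖ ≤ C * Real.exp (-lam * t) * B := by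
    calc ‖F.X x‖ ≤ C * Real.exp (-lam * t) * ‖F.X y‖ := hcontr
      _ ≤ C * Real.exp (-lam * t) * B := by
          apply mul_le_mul_of_nonneg_left hXyB
          exact mul_nonneg hsh.Cpos.le (Real.exp_nonneg _)
  linarith
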